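/- Let p = 2^m − δ be prime, μ < m with δ < 2^μ − 1, and 2^k ≤ p. Let X ≠ X′ be binary strings of lengths L ≥ L′ ≥ 0, α ∈ Z_{2^μ}, and ℓ = ⌈L/n⌉. If τ is uniform over k-bit strings, then Pr[polyHash_τ(X) − polyHash_τ(X′) = α] ≤ ℓ · 2^{m−k−μ+1}. -/

import Mathlib

/-- The (big-endian) numerical value of a bit string. -/
def blockVal (b : List Bool) : ℕ :=
  b.foldl (fun acc bit => 2 * acc + bit.toNat) 0

/-- The `i`-th (0-based) block of `X` after `pad1`: the block `X_{i+1}` of length `len`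
(`len = n` for full blocks, `len = s` for the last), padded to `0^{m−len−2}||1||X_{i+1}`,
whose numerical value is `2^len + val(X_{i+1})`, viewed in `F_p`. -/
def pad1Block (p n : ℕ) (X : List Bool) (i : ℕ) : ZMod p :=
  ((2 ^ ((X.drop (n * i)).take n).length + blockVal ((X.drop (n * i)).take n) : ℕ) : ZMod p)

/-- `polyHash_τ(X) = ((τ·Poly(τ; M_1,…,M_ℓ) mod p) mod 2^μ)` where
`Poly(τ; M_1,…,M_ℓ) = Σ_{i=1}^{ℓ} M_i τ^{ℓ−i}` and `(M_1,…,M_ℓ) = pad1(format(X))`. -/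
def polyHash (p μ n : ℕ) (τ : ZMod p) (X : List Bool) : ZMod (2 ^ μ) :=
  (((τ * ∑ i ∈ Finset.range ((X.length + n - 1) / n),
      pad1Block p n X i * τ ^ ((X.length + n - 1) / n - 1 - i)).val : ℕ) : ZMod (2 ^ μ))

lemma blockVal_foldl (l : List Bool) (acc : ℕ) :
    l.foldl (fun acc bit => 2 * acc + bit.toNat) acc = acc * 2 ^ l.length + blockVal l := by
  induction l generalizing acc with
  | nil => simp [blockVal]
  | cons a l ih =>
    simp only [List.foldl_cons, List.length_cons, blockVal]
    rw [ih, ih (2 * 0 + a.toNat)]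
    ring

lemma blockVal_cons (a : Bool) (l : List Bool) :
    blockVal (a :: l) = a.toNat * 2 ^ l.length + blockVal l := by
  simp only [blockVal, List.foldl_cons]
  rw [blockVal_foldl, blockVal_foldl]; ring

lemma blockVal_lt (l : List Bool) : blockVal l < 2 ^ l.length := by
  induction l with
  | nil => simp [blockVal]
  | cons a l ih =>
    rw [blockVal_cons]
    have : a.toNat ≤ 1 := Bool.toNat_le a
    simp only [List.length_cons, pow_succ]
    nlinarith

lemma blockVal_inj : ∀ (l1 l2 : List Bool), l1.length = l2.length →
    blockVal l1 = blockVal l2 → l1 = l2 := by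
  intro l1
  induction l1 with
  | nil => intro l2 h _; exact (List.length_eq_zero_iff.mp h.symm).symm
  | cons a l ih =>
    intro l2 h hv
    cases l2 with
    | nil => simp at h
    | cons b l2 =>
      simp only [List.length_cons, Nat.succ_inj] at h
      rw [blockVal_cons, blockVal_cons, h] at hv
      have h1 := blockVal_lt l
      have h2 := blockVal_lt l2
      rw [h] at h1
      have hab : a.toNat = b.toNat := by
        have ha := Bool.toNat_le a; have hb := Bool.toNat_le b
        nlinarith
      have hab' : a = b := by cases a <;> cases b <;> simp_all
      rw [hab] at hv
      rw [hab', ih l2 h (by omega)]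

lemma two_pow_add_inj {a b x y : ℕ} (hx : x < 2 ^ a) (hy : y < 2 ^ b)
    (h : 2 ^ a + x = 2 ^ b + y) : a = b ∧ x = y := by
  have hab : a = b := by
    rcases lt_trichotomy a b with h' | h' | h'
    · have h1 : 2 ^ (a + 1) ≤ 2 ^ b := Nat.pow_le_pow_right (by norm_num) h'
      have : 2 ^ (a + 1) = 2 ^ a + 2 ^ a := by ring
      omega
    · exact h'
    · have h1 : 2 ^ (b + 1) ≤ 2 ^ a := Nat.pow_le_pow_right (by norm_num) h'
      have : 2 ^ (b + 1) = 2 ^ b + 2 ^ b := by ring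
      omega
  subst hab
  omega

lemma ceil_div_bounds {L n : ℕ} (hn : 0 < n) (hL : 0 < L) :
    n * ((L + n - 1) / n - 1) < L ∧ L ≤ n * ((L + n - 1) / n) := by
  set q := (L + n - 1) / n with hq
  have hdm : n * q + (L + n - 1) % n = L + n - 1 := Nat.div_add_mod _ _
  have hr : (L + n - 1) % n < n := Nat.mod_lt _ hn
  have hq1 : 1 ≤ q := by
    rcases Nat.eq_zero_or_pos q with h | h
    · rw [h] at hdm; omega
    · exact h
  have h3 : n * (q - 1) = n * q - n := by rw [Nat.mul_sub_one]
  rw [h3]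
  generalize n * q = A at *
  omega

lemma card_eval_roots (p : ℕ) (hp : p.Prime) (R : Polynomial (ZMod p)) (hR : R ≠ 0)
    (N ℓ : ℕ) (hN : N ≤ p) (hd : R.natDegree ≤ ℓ) :
    ((Finset.range N).filter fun t => R.eval ((t : ℕ) : ZMod p) = 0).card ≤ ℓ := by
  haveI := Fact.mk hp
  have h1 : ((Finset.range N).filter fun t => R.eval ((t : ℕ) : ZMod p) = 0).card
      ≤ R.roots.toFinset.card := by
    apply Finset.card_le_card_of_injOn (fun t => ((t : ℕ) : ZMod p))
    · intro t ht
      simp only [Finset.coe_filter, Set.mem_setOf_eq, Finset.mem_filter, Finset.mem_range] at ht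
      simp only [Finset.mem_coe, Multiset.mem_toFinset, Polynomial.mem_roots hR]
      exact ht.2
    · intro a ha b hb hab
      simp only [Finset.coe_filter, Set.mem_setOf_eq, Finset.mem_range] at ha hb
      have := congrArg ZMod.val hab
      rwa [ZMod.val_cast_of_lt (by omega), ZMod.val_cast_of_lt (by omega)] at this
  calc _ ≤ R.roots.toFinset.card := h1
    _ ≤ Multiset.card R.roots := R.roots.toFinset_card_le
    _ ≤ R.natDegree := Polynomial.card_roots' R
    _ ≤ ℓ := hd

lemma eq_of_blocks (n : ℕ) (hn : 0 < n) (X X' : List Bool) (hL : 0 < X.length)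
    (hℓ : (X.length + n - 1) / n = (X'.length + n - 1) / n)
    (h : ∀ i < (X.length + n - 1) / n,
      2 ^ ((X.drop (n * i)).take n).length + blockVal ((X.drop (n * i)).take n)
        = 2 ^ ((X'.drop (n * i)).take n).length + blockVal ((X'.drop (n * i)).take n)) :
    X = X' := by
  obtain ⟨hc1, hc2⟩ := ceil_div_bounds (L := X.length) hn hL
  have hℓ1 : 1 ≤ (X.length + n - 1) / n := by
    by_contra hc
    have hq0 : (X.length + n - 1) / n = 0 := Nat.eq_zero_of_not_pos hc
    rw [hq0, Nat.mul_zero] at hc2; omega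
  have hL' : 0 < X'.length := by
    by_contra hc
    have h0 : X'.length = 0 := Nat.eq_zero_of_not_pos hc
    rw [h0] at hℓ
    rw [show (0 + n - 1) / n = 0 from Nat.div_eq_of_lt (by omega)] at hℓ
    rw [hℓ, Nat.mul_zero] at hc2; omega
  obtain ⟨hc1', hc2'⟩ := ceil_div_bounds (L := X'.length) hn hL'
  rw [← hℓ] at hc1' hc2'
  -- blocks are equal as lists
  have hB : ∀ i < (X.length + n - 1) / n,
      (X.drop (n * i)).take n = (X'.drop (n * i)).take n := by
    intro i hi
    obtain ⟨hlen, hval⟩ := two_pow_add_inj (blockVal_lt _) (blockVal_lt _) (h i hi)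
    exact blockVal_inj _ _ hlen hval
  -- lengths are equal
  have hlen : X.length = X'.length := by
    have hlb := congrArg List.length (hB ((X.length + n - 1) / n - 1) (by omega))
    simp only [List.length_take, List.length_drop] at hlb
    have e1 : n * ((X.length + n - 1) / n - 1) = n * ((X.length + n - 1) / n) - n :=
      Nat.mul_sub_one n _
    have e2 : n * 1 ≤ n * ((X.length + n - 1) / n) := Nat.mul_le_mul_left n hℓ1
    omega
  -- elementwise equality
  apply List.ext_getElem?
  intro j
  by_cases hj : j < X.length
  · have hiℓ : j / n < (X.length + n - 1) / n := by
      rw [Nat.div_lt_iff_lt_mul hn]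
      calc j < X.length := hj
        _ ≤ n * ((X.length + n - 1) / n) := hc2
        _ = (X.length + n - 1) / n * n := by ring
    have hg := congrArg (fun l : List Bool => l[j % n]?) (hB (j / n) hiℓ)
    simp only [List.getElem?_take_of_lt (Nat.mod_lt j hn), List.getElem?_drop] at hg
    rwa [Nat.div_add_mod] at hg
  · rw [List.getElem?_eq_none (by omega), List.getElem?_eq_none (by omega)]

lemma blockNat_lt (n : ℕ) (Y : List Bool) (i : ℕ) :
    2 ^ ((Y.drop (n * i)).take n).length + blockVal ((Y.drop (n * i)).take n) < 2 ^ (n + 1) := by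
  have h1 : ((Y.drop (n * i)).take n).length ≤ n := by
    simp [List.length_take]
  have h2 := blockVal_lt ((Y.drop (n * i)).take n)
  have h3 : 2 ^ ((Y.drop (n * i)).take n).length ≤ 2 ^ n := Nat.pow_le_pow_right (by norm_num) h1
  have h4 : (2 : ℕ) ^ (n + 1) = 2 ^ n + 2 ^ n := by ring
  omega

lemma coeff_polysum (p : ℕ) (c : ℕ → ZMod p) (ℓY i : ℕ) (hi : i < ℓY) :
    (∑ j ∈ Finset.range ℓY, Polynomial.C (c j) * Polynomial.X ^ (ℓY - 1 - j)).coeff (ℓY - 1 - i)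
      = c i := by
  rw [Polynomial.finset_sum_coeff]
  rw [Finset.sum_eq_single i]
  · simp [Polynomial.coeff_C_mul, Polynomial.coeff_X_pow]
  · intro j hj hne
    have hj' := Finset.mem_range.mp hj
    simp only [Polynomial.coeff_C_mul, Polynomial.coeff_X_pow]
    rw [if_neg (by omega), mul_zero]
  · intro hiabs
    exact absurd (Finset.mem_range.mpr hi) hiabs

lemma coeff_polysum_zero (p : ℕ) (c : ℕ → ZMod p) (ℓY e : ℕ) (he : ∀ j < ℓY, ℓY - 1 - j ≠ e) :
    (∑ j ∈ Finset.range ℓY, Polynomial.C (c j) * Polynomial.X ^ (ℓY - 1 - j)).coeff e = 0 := by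
  rw [Polynomial.finset_sum_coeff]
  apply Finset.sum_eq_zero
  intro j hj
  simp only [Polynomial.coeff_C_mul, Polynomial.coeff_X_pow]
  rw [if_neg (fun h => he j (Finset.mem_range.mp hj) h.symm), mul_zero]

/-- AXU bound for `polyHash`: with `p = 2^m − δ` prime, `μ < m`, `δ < 2^μ − 1`, `2^k ≤ p`,
distinct messages `X ≠ X'` with `L ≥ L'`, `ℓ = ⌈L/n⌉`, and `τ` uniform over `k`-bit strings,
`Pr[polyHash_τ(X) − polyHash_τ(X') = α] ≤ ℓ·2^(m−k−μ+1)`. -/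
theorem polyHash_axu_bound (m δ μ k p n : ℕ) [NeZero p] (hp : p.Prime)
    (hpm : p = 2 ^ m - δ) (hμ0 : 0 < μ) (hμm : μ < m) (hδ : δ < 2 ^ μ - 1)
    (hk : 0 < k) (hkp : 2 ^ k ≤ p) (hn : 0 < n) (hnm : n + 2 ≤ m)
    (X X' : List Bool) (hXX' : X ≠ X') (hLL : X'.length ≤ X.length)
    (α : ZMod (2 ^ μ)) :
    (((Finset.range (2 ^ k)).filter fun t : ℕ =>
        polyHash p μ n (t : ZMod p) X - polyHash p μ n (t : ZMod p) X' = α).card : ℝ)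
        / (2 ^ k : ℝ)
      ≤ (((X.length + n - 1) / n : ℕ) : ℝ) * (2 : ℝ) ^ ((m : ℤ) - k - μ + 1) := by
  haveI hpF := Fact.mk hp
  haveI : NeZero (2 ^ μ) := ⟨pow_ne_zero _ two_ne_zero⟩
  set ℓ := (X.length + n - 1) / n with hℓdef
  set ℓ' := (X'.length + n - 1) / n with hℓ'def
  -- basic numeric facts
  have hδ1 : 1 ≤ δ := by
    by_contra hc
    have h0 : δ = 0 := by omega
    rw [h0, Nat.sub_zero] at hpm
    have h2 : 2 ∣ p := hpm ▸ dvd_pow_self 2 (by omega)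
    have := (Nat.prime_dvd_prime_iff_eq Nat.prime_two hp).mp h2
    have hm1 : m = 1 := Nat.pow_right_injective (le_refl 2)
      (show 2 ^ m = 2 ^ 1 by rw [← hpm]; omega)
    omega
  have hm2 : 2 ≤ m := by omega
  have h2μ : 2 ^ μ ≤ 2 ^ (m - 1) := Nat.pow_le_pow_right (by norm_num) (by omega)
  have h2m : 2 ^ m = 2 ^ (m - 1) + 2 ^ (m - 1) := by
    have e : m = (m - 1) + 1 := by omega
    conv_lhs => rw [e, pow_succ]
    omega
  have hμp : 0 < 2 ^ μ := Nat.pow_pos (by norm_num)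
  have hplb : 2 ^ (m - 1) < p := by omega
  have hpub : p ≤ 2 ^ m - 1 := by omega
  have hblk : ∀ (Y : List Bool) (i : ℕ),
      2 ^ ((Y.drop (n * i)).take n).length + blockVal ((Y.drop (n * i)).take n) < p := by
    intro Y i
    have h1 := blockNat_lt n Y i
    have h2 : (2 : ℕ) ^ (n + 1) ≤ 2 ^ (m - 1) := Nat.pow_le_pow_right (by norm_num) (by omega)
    omega
  -- message lengths
  have hL0 : 0 < X.length := by
    by_contra hc
    have h1 : X = [] := List.length_eq_zero_iff.mp (by omega)
    have h2 : X' = [] := List.length_eq_zero_iff.mp (by omega)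
    exact hXX' (h1.trans h2.symm)
  obtain ⟨hc1, hc2⟩ := ceil_div_bounds (L := X.length) hn hL0
  rw [← hℓdef] at hc1 hc2
  have hℓ1 : 1 ≤ ℓ := by
    by_contra hc
    have hq0 : ℓ = 0 := Nat.eq_zero_of_not_pos hc
    rw [hq0, Nat.mul_zero] at hc2; omega
  have hℓ'ℓ : ℓ' ≤ ℓ := Nat.div_le_div_right (by omega)
  -- the polynomials
  set P1 : Polynomial (ZMod p) :=
    ∑ j ∈ Finset.range ℓ, Polynomial.C (pad1Block p n X j) * Polynomial.X ^ (ℓ - 1 - j) with hP1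
  set P2 : Polynomial (ZMod p) :=
    ∑ j ∈ Finset.range ℓ', Polynomial.C (pad1Block p n X' j) * Polynomial.X ^ (ℓ' - 1 - j) with hP2
  set Q : Polynomial (ZMod p) := Polynomial.X * (P1 - P2) with hQ
  have hQeval : ∀ τ : ZMod p, Q.eval τ =
      τ * (∑ i ∈ Finset.range ℓ, pad1Block p n X i * τ ^ (ℓ - 1 - i))
        - τ * (∑ i ∈ Finset.range ℓ', pad1Block p n X' i * τ ^ (ℓ' - 1 - i)) := by
    intro τ
    simp [hQ, hP1, hP2, Polynomial.eval_finset_sum, mul_sub]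
  -- cast injectivity for block values
  have hcastinj : ∀ a b : ℕ, a < p → b < p → ((a : ZMod p) = (b : ZMod p)) → a = b := by
    intro a b ha hb hab
    have := congrArg ZMod.val hab
    rwa [ZMod.val_cast_of_lt ha, ZMod.val_cast_of_lt hb] at this
  -- P1 ≠ P2
  have hP12 : P1 ≠ P2 := by
    intro hEq
    by_cases hll : ℓ' = ℓ
    · apply hXX'
      apply eq_of_blocks n hn X X' hL0 (by rw [← hℓdef, ← hℓ'def, hll])
      intro i hi
      have h1 := congrArg (fun P => Polynomial.coeff P (ℓ - 1 - i)) hEq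
      simp only [hP1, hP2, hll] at h1
      rw [coeff_polysum p _ ℓ i hi, coeff_polysum p _ ℓ i hi] at h1
      exact hcastinj _ _ (hblk X i) (hblk X' i) h1
    · have h1 := congrArg (fun P => Polynomial.coeff P (ℓ - 1 - 0)) hEq
      simp only [hP1, hP2] at h1
      rw [coeff_polysum p _ ℓ 0 (by omega)] at h1
      rw [coeff_polysum_zero p _ ℓ' (ℓ - 1 - 0) (by intro j hj; omega)] at h1
      have := hblk X 0
      have h2 : (2 : ℕ) ^ ((X.drop (n * 0)).take n).length
          + blockVal ((X.drop (n * 0)).take n) ≠ 0 := by positivity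
      apply h2
      apply hcastinj _ 0 (hblk X 0) (by omega)
      simpa [pad1Block] using h1
  have hQne : Q ≠ 0 := by
    intro h
    rcases mul_eq_zero.mp h with h | h
    · exact Polynomial.X_ne_zero h
    · exact hP12 (sub_eq_zero.mp h)
  have hQdeg : Q.natDegree ≤ ℓ := by
    have hd1 : P1.natDegree ≤ ℓ - 1 := by
      apply Polynomial.natDegree_sum_le_of_forall_le
      intro j hj
      calc (Polynomial.C (pad1Block p n X j) * Polynomial.X ^ (ℓ - 1 - j)).natDegree
          ≤ _ + _ := Polynomial.natDegree_mul_le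
        _ ≤ ℓ - 1 := by
            rw [Polynomial.natDegree_C, Polynomial.natDegree_X_pow]; omega
    have hd2 : P2.natDegree ≤ ℓ - 1 := by
      apply Polynomial.natDegree_sum_le_of_forall_le
      intro j hj
      calc (Polynomial.C (pad1Block p n X' j) * Polynomial.X ^ (ℓ' - 1 - j)).natDegree
          ≤ _ + _ := Polynomial.natDegree_mul_le
        _ ≤ ℓ - 1 := by
            rw [Polynomial.natDegree_C, Polynomial.natDegree_X_pow]; omega
    calc Q.natDegree ≤ Polynomial.X.natDegree + (P1 - P2).natDegree := Polynomial.natDegree_mul_le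
      _ ≤ 1 + (ℓ - 1) := by
          have := Polynomial.natDegree_sub_le P1 P2
          rw [Polynomial.natDegree_X]
          omega
      _ ≤ ℓ := by omega
  -- the value functions
  set v1 : ℕ → ℕ := fun t => ((t : ZMod p)
      * ∑ i ∈ Finset.range ℓ, pad1Block p n X i * (t : ZMod p) ^ (ℓ - 1 - i)).val with hv1
  set v2 : ℕ → ℕ := fun t => ((t : ZMod p)
      * ∑ i ∈ Finset.range ℓ', pad1Block p n X' i * (t : ZMod p) ^ (ℓ' - 1 - i)).val with hv2
  -- the difference sets
  set D : Finset ℤ := (Finset.Ico (1 - (p : ℤ)) (p : ℤ)).filter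
      (fun d => ((d : ℤ) : ZMod (2 ^ μ)) = α) with hD
  set S := (Finset.range (2 ^ k)).filter fun t : ℕ =>
      polyHash p μ n (t : ZMod p) X - polyHash p μ n (t : ZMod p) X' = α with hS
  have hsub : S ⊆ D.biUnion (fun d => (Finset.range (2 ^ k)).filter
      (fun t => (Q - Polynomial.C ((d : ℤ) : ZMod p)).eval ((t : ℕ) : ZMod p) = 0)) := by
    intro t ht
    rw [hS, Finset.mem_filter] at ht
    obtain ⟨htr, htc⟩ := ht
    rw [Finset.mem_biUnion]
    refine ⟨(v1 t : ℤ) - (v2 t : ℤ), ?_, ?_⟩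
    · rw [hD, Finset.mem_filter, Finset.mem_Ico]
      have hb1 : v1 t < p := ZMod.val_lt _
      have hb2 : v2 t < p := ZMod.val_lt _
      refine ⟨⟨by omega, by omega⟩, ?_⟩
      simp only [polyHash, ← hℓdef, ← hℓ'def, ← hv1, ← hv2] at htc
      push_cast
      exact htc
    · rw [Finset.mem_filter]
      refine ⟨htr, ?_⟩
      rw [Polynomial.eval_sub, Polynomial.eval_C, hQeval]
      have e1 : ((v1 t : ℕ) : ZMod p) = (t : ZMod p)
          * ∑ i ∈ Finset.range ℓ, pad1Block p n X i * (t : ZMod p) ^ (ℓ - 1 - i) := by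
        rw [hv1]; simp [ZMod.natCast_val, ZMod.cast_id]
      have e2 : ((v2 t : ℕ) : ZMod p) = (t : ZMod p)
          * ∑ i ∈ Finset.range ℓ', pad1Block p n X' i * (t : ZMod p) ^ (ℓ' - 1 - i) := by
        rw [hv2]; simp [ZMod.natCast_val, ZMod.cast_id]
      rw [← e1, ← e2]
      push_cast
      ring
  have hroots : ∀ d : ℤ, ((Finset.range (2 ^ k)).filter
      (fun t => (Q - Polynomial.C ((d : ℤ) : ZMod p)).eval ((t : ℕ) : ZMod p) = 0)).card ≤ ℓ := by
    intro d
    refine card_eval_roots p hp _ ?_ _ ℓ hkp ?_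
    · intro h
      have hQC : Q = Polynomial.C ((d : ℤ) : ZMod p) := by
        have := sub_eq_zero.mp h; exact this
      have h0 : Q.coeff 0 = 0 := by
        rw [hQ, Polynomial.mul_coeff_zero, Polynomial.coeff_X_zero, zero_mul]
      rw [hQC, Polynomial.coeff_C_zero] at h0
      rw [h0, map_zero] at hQC
      exact hQne hQC
    · calc (Q - Polynomial.C ((d : ℤ) : ZMod p)).natDegree
          ≤ max Q.natDegree (Polynomial.C ((d : ℤ) : ZMod p)).natDegree :=
            Polynomial.natDegree_sub_le _ _
        _ ≤ ℓ := by rw [Polynomial.natDegree_C]; omega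
  have hDcard : D.card ≤ 2 ^ (m + 1 - μ) := by
    have hNμ : 2 ^ (m + 1 - μ) * 2 ^ μ = 2 ^ (m + 1) := by
      rw [← pow_add]; congr 1; omega
    have h2m1 : (2 : ℕ) ^ (m + 1) = 2 ^ m + 2 ^ m := by ring
    have hle : D.card ≤ (Finset.range (2 ^ (m + 1 - μ))).card := by
      apply Finset.card_le_card_of_injOn (fun d : ℤ => (d + (p : ℤ) - 1).toNat / 2 ^ μ)
      · intro d hd
        rw [hD, Finset.mem_coe, Finset.mem_filter, Finset.mem_Ico] at hd
        obtain ⟨⟨hd1, hd2⟩, _⟩ := hd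
        rw [Finset.mem_coe, Finset.mem_range, Nat.div_lt_iff_lt_mul hμp, hNμ]
        have he : ((d + (p : ℤ) - 1).toNat : ℤ) = d + p - 1 := Int.toNat_of_nonneg (by omega)
        omega
      · intro d1 hd1 d2 hd2 hEq
        simp only [hD, Finset.coe_filter, Set.mem_setOf_eq, Finset.mem_Ico] at hd1 hd2
        obtain ⟨⟨h11, h12⟩, h13⟩ := hd1
        obtain ⟨⟨h21, h22⟩, h23⟩ := hd2
        set a1 := (d1 + (p : ℤ) - 1).toNat with ha1
        set a2 := (d2 + (p : ℤ) - 1).toNat with ha2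
        have e1 : (a1 : ℤ) = d1 + p - 1 := Int.toNat_of_nonneg (by omega)
        have e2 : (a2 : ℤ) = d2 + p - 1 := Int.toNat_of_nonneg (by omega)
        -- same residue mod 2^μ
        have hres : a1 % 2 ^ μ = a2 % 2 ^ μ := by
          rw [← ZMod.natCast_eq_natCast_iff']
          have c1 : ((a1 : ℕ) : ZMod (2 ^ μ)) = ((d1 + (p : ℤ) - 1 : ℤ) : ZMod (2 ^ μ)) := by
            rw [← e1]; push_cast; ring
          have c2 : ((a2 : ℕ) : ZMod (2 ^ μ)) = ((d2 + (p : ℤ) - 1 : ℤ) : ZMod (2 ^ μ)) := by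
            rw [← e2]; push_cast; ring
          rw [c1, c2]
          push_cast
          rw [h13, h23]
        have hq : a1 / 2 ^ μ = a2 / 2 ^ μ := hEq
        have hdm1 : 2 ^ μ * (a1 / 2 ^ μ) + a1 % 2 ^ μ = a1 := Nat.div_add_mod _ _
        have hdm2 : 2 ^ μ * (a2 / 2 ^ μ) + a2 % 2 ^ μ = a2 := Nat.div_add_mod _ _
        rw [hq] at hdm1
        have : a1 = a2 := by omega
        omega
    simpa using hle
  have hcard : S.card ≤ 2 ^ (m + 1 - μ) * ℓ := by
    calc S.card ≤ _ := Finset.card_le_card hsub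
      _ ≤ ∑ d ∈ D, ((Finset.range (2 ^ k)).filter
          (fun t => (Q - Polynomial.C ((d : ℤ) : ZMod p)).eval ((t : ℕ) : ZMod p) = 0)).card :=
        Finset.card_biUnion_le
      _ ≤ ∑ _d ∈ D, ℓ := Finset.sum_le_sum (fun d _ => hroots d)
      _ = D.card * ℓ := by rw [Finset.sum_const, smul_eq_mul]
      _ ≤ 2 ^ (m + 1 - μ) * ℓ := Nat.mul_le_mul_right _ hDcard
  -- final real arithmetic
  have h2k : (0 : ℝ) < 2 ^ k := by positivity
  rw [div_le_iff₀ h2k]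
  have hzp : (2 : ℝ) ^ ((m : ℤ) - k - μ + 1) * (2 : ℝ) ^ (k : ℤ)
      = (2 : ℝ) ^ (((m + 1 - μ : ℕ) : ℤ)) := by
    rw [← zpow_add₀ (by norm_num : (2 : ℝ) ≠ 0)]
    congr 1
    have : ((m + 1 - μ : ℕ) : ℤ) = (m : ℤ) + 1 - μ := by omega
    rw [this]; ring
  calc (S.card : ℝ) ≤ ((2 ^ (m + 1 - μ) * ℓ : ℕ) : ℝ) := by exact_mod_cast hcard
    _ = (ℓ : ℝ) * (2 : ℝ) ^ (((m + 1 - μ : ℕ) : ℤ)) := by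
        push_cast
        rw [zpow_natCast]
        ring
    _ = (ℓ : ℝ) * ((2 : ℝ) ^ ((m : ℤ) - k - μ + 1) * (2 : ℝ) ^ (k : ℤ)) := by rw [hzp]
    _ = (ℓ : ℝ) * (2 : ℝ) ^ ((m : ℤ) - k - μ + 1) * (2 : ℝ) ^ k := by
        rw [zpow_natCast]; ring
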